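/- (Landen-type transformation.) Let k ∈ ℂ, let (S, C, D) be a Jacobi triple with modulus k, let ε ∈ {1, −1}, and let β ∈ ℂ with β² = 1 − k and λ := β − ε ≠ 0. Writing w = z/λ, on the open set U = { z ∈ ℂ : D(w) ≠ 0 and (εβ − 1)·S(w)² + 1 ≠ 0 }, the triple (z ↦ λ·S(w)·C(w)/D(w), z ↦ ((εβ − 1)·S(w)² + 1)/D(w), z ↦ (1 − (D(w)² + 1)·S(w)²) / (D(w)·((εβ − 1)·S(w)² + 1))) satisfies system (1) with modulus ((β + ε)/(β − ε))². -/

import Mathlib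

/-- A Jacobi triple with modulus `k`: the model is `(sn(·|k), cn(·|k), dn(·|k))`. -/
def IsJacobiTriple (k : ℂ) (S C D : ℂ → ℂ) : Prop :=
  ∀ z : ℂ, HasDerivAt S (C z * D z) z ∧ HasDerivAt C (-(S z * D z)) z ∧
    HasDerivAt D (-(k * S z * C z)) z ∧
    S z ^ 2 + C z ^ 2 = 1 ∧ D z ^ 2 + k * S z ^ 2 = 1

/-- A triple `(St, Ct, Dt)` satisfies system (1) with modulus `m` on `U`:
at every point of `U` the functions are differentiable with `St′ = Ct·Dt`,
and `St² + Ct² = 1` and `Dt² + m·St² = 1` hold on `U`. -/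
def SatisfiesSystem1 (m : ℂ) (St Ct Dt : ℂ → ℂ) (U : Set ℂ) : Prop :=
  ∀ z ∈ U, HasDerivAt St (Ct z * Dt z) z ∧
    DifferentiableAt ℂ Ct z ∧ DifferentiableAt ℂ Dt z ∧
    St z ^ 2 + Ct z ^ 2 = 1 ∧ Dt z ^ 2 + m * St z ^ 2 = 1

set_option maxHeartbeats 1000000 in
theorem stmt_8 (k : ℂ) (S C D : ℂ → ℂ) (hJ : IsJacobiTriple k S C D)
    (ε : ℂ) (hε : ε = 1 ∨ ε = -1)
    (β : ℂ) (hβ : β ^ 2 = 1 - k) (hl : β - ε ≠ 0) :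
    SatisfiesSystem1 (((β + ε) / (β - ε)) ^ 2)
      (fun z => (β - ε) * S (z / (β - ε)) * C (z / (β - ε)) / D (z / (β - ε)))
      (fun z => ((ε * β - 1) * S (z / (β - ε)) ^ 2 + 1) / D (z / (β - ε)))
      (fun z => (1 - (D (z / (β - ε)) ^ 2 + 1) * S (z / (β - ε)) ^ 2) /
        (D (z / (β - ε)) * ((ε * β - 1) * S (z / (β - ε)) ^ 2 + 1)))
      {z : ℂ | D (z / (β - ε)) ≠ 0 ∧ (ε * β - 1) * S (z / (β - ε)) ^ 2 + 1 ≠ 0} := by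
  intro z hz
  simp only [Set.mem_setOf_eq] at hz
  obtain ⟨hd, ha⟩ := hz
  obtain ⟨hS, hC, hD, h1, h2⟩ := hJ (z / (β - ε))
  have he : ε ^ 2 = 1 := by rcases hε with rfl | rfl <;> norm_num
  set s := S (z / (β - ε)) with hs
  set c := C (z / (β - ε)) with hc
  set d := D (z / (β - ε)) with hdd
  have hg : HasDerivAt (fun z : ℂ => z / (β - ε)) (1 / (β - ε)) z :=
    (hasDerivAt_id z).div_const _
  have hSw : HasDerivAt (fun z => S (z / (β - ε))) (c * d * (1 / (β - ε))) z := hS.comp z hg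
  have hCw : HasDerivAt (fun z => C (z / (β - ε))) (-(s * d) * (1 / (β - ε))) z := hC.comp z hg
  have hDw : HasDerivAt (fun z => D (z / (β - ε))) (-(k * s * c) * (1 / (β - ε))) z := hD.comp z hg
  have key3 : (c ^ 2 - s ^ 2) * d ^ 2 + k * s ^ 2 * c ^ 2 = 1 - (d ^ 2 + 1) * s ^ 2 := by
    linear_combination (d ^ 2 + s ^ 2 * k) * h1 + (1 - s ^ 2) * h2
  refine ⟨?_, ?_, ?_, ?_, ?_⟩
  · have hNum : HasDerivAt (fun z => (β - ε) * S (z / (β - ε)) * C (z / (β - ε)))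
        ((β - ε) * (c * d * (1 / (β - ε))) * c + (β - ε) * s * (-(s * d) * (1 / (β - ε)))) z :=
      (hSw.const_mul (β - ε)).mul hCw
    have hSt := hNum.div hDw hd
    convert hSt using 1
    iterate 3 rfl
    beta_reduce
    rw [← hs, ← hc, ← hdd]
    field_simp
    linear_combination (-1 : ℂ) * key3
  · exact (((hSw.differentiableAt.pow 2).const_mul _).add_const 1).div hDw.differentiableAt hd
  · refine DifferentiableAt.div ?_ ?_ (mul_ne_zero hd ha)
    · exact ((hDw.differentiableAt.pow 2).add_const 1).mul (hSw.differentiableAt.pow 2) |>.const_sub 1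
    · exact hDw.differentiableAt.mul (((hSw.differentiableAt.pow 2).const_mul _).add_const 1)
  · have key1 : ((β - ε) * s * c) ^ 2 + ((ε * β - 1) * s ^ 2 + 1) ^ 2 = d ^ 2 := by
      linear_combination (s ^ 2 * β ^ 2 - 2 * s ^ 2 * ε * β + s ^ 2 * ε ^ 2) * h1 - h2 +
        (s ^ 2 - s ^ 4 + s ^ 4 * β ^ 2) * he + s ^ 2 * hβ
    show ((β - ε) * s * c / d) ^ 2 + (((ε * β - 1) * s ^ 2 + 1) / d) ^ 2 = 1
    field_simp
    linear_combination key1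
  · have key2 : (1 - (d ^ 2 + 1) * s ^ 2) ^ 2 +
        (β + ε) ^ 2 * s ^ 2 * c ^ 2 * ((ε * β - 1) * s ^ 2 + 1) ^ 2 =
        d ^ 2 * ((ε * β - 1) * s ^ 2 + 1) ^ 2 := by
      linear_combination (s^2*β^2 + 2*s^2*ε*β + s^2*ε^2 - 2*s^4*β^2 - 4*s^4*ε*β + 2*s^4*ε*β^3
          - 2*s^4*ε^2 + 4*s^4*ε^2*β^2 + 2*s^4*ε^3*β + s^6*β^2 + 2*s^6*ε*β - 2*s^6*ε*β^3
          + s^6*ε^2 - 4*s^6*ε^2*β^2 + s^6*ε^2*β^4 - 2*s^6*ε^3*β + 2*s^6*ε^3*β^3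
          + s^6*ε^4*β^2) * h1 +
        (-1 - 2*s^2*ε*β + 2*s^4 + 2*s^4*ε*β - s^4*ε^2*β^2 + s^4*d^2 - s^6*k) * h2 +
        (s^2 - 3*s^4 + 3*s^4*β^2 + 2*s^4*ε*β + 4*s^6 - s^6*k - 8*s^6*β^2 + s^6*β^2*k
          + s^6*β^4 - 4*s^6*ε*β + 2*s^6*ε*β^3 + s^6*ε^2*β^2 - 2*s^8 + s^8*k + 4*s^8*β^2
          - s^8*β^4 + 2*s^8*ε*β - 2*s^8*ε*β^3 - s^8*ε^2*β^2) * he +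
        (s^2 + 2*s^4*ε*β - 4*s^6 + s^6*β^2 - 2*s^6*ε*β + s^6*ε^2 + 2*s^8 + s^8*k
          - s^8*β^2 - s^8*ε^2) * hβ
    show ((1 - (d ^ 2 + 1) * s ^ 2) / (d * ((ε * β - 1) * s ^ 2 + 1))) ^ 2 +
      ((β + ε) / (β - ε)) ^ 2 * ((β - ε) * s * c / d) ^ 2 = 1
    field_simp
    have ha2 : (s ^ 2 * (ε * β - 1) + 1) ^ 2 ≠ 0 := pow_ne_zero 2 (by rw [mul_comm]; exact ha)
    rw [div_add' _ _ _ ha2, div_eq_iff ha2]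
    linear_combination key2
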